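/- arXiv:2009.09424 — 2 statements merged into one kernel-verified Lean document; each statement's English description precedes it below -/
import Mathlib

section
/- Let R be a commutative ring, J an ideal of R, and r, r1, r2 ∈ R such that r ∈ J, J + ⟨r1⟩ = ⟨r⟩, and J + ⟨r2⟩ = ⟨r⟩. Then in the polynomial ring R[T], the ideal generated by the image of J together with the element r1*(1 - T) + r2*T equals the ideal generated by the constant polynomial r. -/
open Polynomial

theorem stmt_3 {R : Type*} [CommRing R] (J : Ideal R) (r r1 r2 : R)
    (hr : r ∈ J)
    (h1 : J ⊔ Ideal.span {r1} = Ideal.span {r})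
    (h2 : J ⊔ Ideal.span {r2} = Ideal.span {r}) :
    J.map (C : R →+* R[X]) ⊔ Ideal.span {C r1 * (1 - X) + C r2 * X}
      = Ideal.span {(C r : R[X])} := by
  apply le_antisymm
  · apply sup_le
    · have hJ : J ≤ Ideal.span {r} := h1 ▸ le_sup_left
      calc J.map C ≤ (Ideal.span {r}).map C := Ideal.map_mono hJ
        _ = Ideal.span {(C r : R[X])} := by rw [Ideal.map_span, Set.image_singleton]
    · rw [Ideal.span_le, Set.singleton_subset_iff]
      have hr1 : r1 ∈ Ideal.span {r} := h1 ▸ Ideal.mem_sup_right (Ideal.subset_span rfl)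
      have hr2 : r2 ∈ Ideal.span {r} := h2 ▸ Ideal.mem_sup_right (Ideal.subset_span rfl)
      obtain ⟨a, ha⟩ := Ideal.mem_span_singleton'.mp hr1
      obtain ⟨b, hb⟩ := Ideal.mem_span_singleton'.mp hr2
      rw [SetLike.mem_coe, Ideal.mem_span_singleton']
      exact ⟨C a * (1 - X) + C b * X, by rw [← ha, ← hb]; push_cast [map_mul]; ring⟩
  · rw [Ideal.span_le, Set.singleton_subset_iff]
    exact Ideal.mem_sup_left (Ideal.mem_map_of_mem C hr)
end

section
/- Let R be a commutative ring, J an ideal of R, and r, δ ∈ R such that δ lies in the radical of the ideal ⟨r⟩ + (J : ⟨r⟩). Then in the polynomial ring R[S], the ideal generated by the image of (J : ⟨r⟩), the constant polynomial r, and the polynomial 1 + δ*S is the unit ideal. -/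
open Polynomial

theorem stmt_5 {R : Type*} [CommRing R] (J : Ideal R) (r δ : R)
    (hδ : δ ∈ (Ideal.span {r} ⊔ J.colon (Ideal.span {r})).radical) :
    (J.colon (Ideal.span {r})).map (C : R →+* R[X]) ⊔
      Ideal.span {(C r : R[X]), 1 + C δ * X} = ⊤ := by
  obtain ⟨n, hn⟩ := hδ
  set I := (J.colon (Ideal.span {r})).map (C : R →+* R[X]) ⊔
      Ideal.span {(C r : R[X]), 1 + C δ * X} with hI
  rw [Ideal.eq_top_iff_one]
  set x : R[X] := -(C δ * X) with hx
  have hxn : x ^ n ∈ I := by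
    have h1 : (C (δ ^ n) : R[X]) ∈ (Ideal.span {r} ⊔ J.colon (Ideal.span {r})).map C :=
      Ideal.mem_map_of_mem _ hn
    rw [Ideal.map_sup] at h1
    have hle : (Ideal.span {r}).map (C : R →+* R[X]) ⊔
        (J.colon (Ideal.span {r})).map (C : R →+* R[X]) ≤ I := by
      apply sup_le
      · rw [Ideal.map_span]
        refine le_trans (Ideal.span_mono ?_) le_sup_right
        intro y hy
        simp only [Set.image_singleton, Set.mem_singleton_iff] at hy
        simp [hy]
      · exact le_sup_left
    have h2 : (C (δ ^ n) : R[X]) ∈ I := hle h1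
    have : x ^ n = (-X) ^ n * C (δ ^ n) := by
      rw [hx]; rw [map_pow]; ring
    rw [this]
    exact Ideal.mul_mem_left _ _ h2
  have hgen : (1 + C δ * X : R[X]) ∈ I := by
    exact Ideal.mem_sup_right (Ideal.subset_span (by simp))
  have key : (1 : R[X]) =
      (∑ i ∈ Finset.range n, x ^ i) * (1 + C δ * X) + x ^ n := by
    have h := geom_sum_mul x n
    linear_combination h
  rw [key]
  exact add_mem (Ideal.mul_mem_left _ _ hgen) hxn
end
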